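/- arXiv:1206.5501 — 7 statements merged into one kernel-verified Lean document; each statement's English description precedes it below -/
import Mathlib

section
/- The multiplication map of the quaternion algebra over ℝ (with i² = −1, j² = −1, ij = −ji = k) admits a bilinear algorithm of length 8; that is, there exist linear functionals f₁,…,f₈ and g₁,…,g₈ on ℍ and elements z₁,…,z₈ ∈ ℍ such that for all u, v ∈ ℍ, u·v = ∑_{k=1}^{8} f_k(u)·g_k(v)·z_k. -/
open Quaternion

private noncomputable def qdual (a b c d : ℝ) : Module.Dual ℝ ℍ[ℝ] :=
  a • QuaternionAlgebra.reₗ (-1 : ℝ) 0 (-1) + b • QuaternionAlgebra.imIₗ (-1 : ℝ) 0 (-1)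
    + c • QuaternionAlgebra.imJₗ (-1 : ℝ) 0 (-1) + d • QuaternionAlgebra.imKₗ (-1 : ℝ) 0 (-1)

private lemma qdual_apply (a b c d : ℝ) (u : ℍ[ℝ]) :
    qdual a b c d u = a * u.re + b * u.imI + c * u.imJ + d * u.imK := by
  rfl

theorem quaternion_mul_bilinear_algorithm_length_eight :
    ∃ (f g : Fin 8 → Module.Dual ℝ ℍ[ℝ]) (z : Fin 8 → ℍ[ℝ]),
      ∀ u v : ℍ[ℝ], u * v = ∑ k : Fin 8, (f k u * g k v) • z k := by
  refine ⟨![qdual 1 1 0 0, qdual 0 0 (-1) 1, qdual (-1) 1 0 0, qdual 0 0 1 1,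
            qdual 0 1 0 1, qdual 0 1 0 (-1), qdual 1 0 1 0, qdual 1 0 (-1) 0],
          ![qdual 1 1 0 0, qdual 0 0 1 (-1), qdual 0 0 1 1, qdual (-1) 1 0 0,
            qdual 0 1 1 0, qdual 0 1 (-1) 0, qdual 1 0 0 (-1), qdual 1 0 0 1],
          ![⟨0,1,0,0⟩, ⟨1,0,0,0⟩, ⟨0,0,-1,0⟩, ⟨0,0,0,-1⟩,
            ⟨-1/2,-1/2,1/2,1/2⟩, ⟨-1/2,-1/2,-1/2,-1/2⟩,
            ⟨1/2,-1/2,1/2,-1/2⟩, ⟨1/2,-1/2,-1/2,1/2⟩], ?_⟩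
  intro u v
  simp only [Fin.sum_univ_succ, Finset.sum_empty, Finset.univ_eq_empty, Matrix.cons_val_zero,
    Matrix.cons_val_succ, qdual_apply, add_zero]
  ext <;> simp [Quaternion.re_mul, Quaternion.imI_mul, Quaternion.imJ_mul, Quaternion.imK_mul] <;>
    simp only [HSMul.hSMul, SMul.smul, Quaternion.instSMul._aux_1] <;>
    exact (by simp only [show ∀ a b : ℝ, Mul.mul a b = a * b from fun _ _ => rfl]; ring)
end

section
/- Let F be a field with char F ≠ 2, and let H be a quaternion algebra over F with basis 1, i, j, k where i² = p, j² = q, ij = −ji = k, for p, q ∈ Fˣ. Fix nonzero α, β, γ ∈ F. Define z′₁ = 1+αi+βj+γk, z′₂ = 1+αi−βj−γk, z′₃ = 1−αi+βj−γk, z′₄ = 1−αi−βj+γk, and z″₁ = 1−αi−βj−γk, z″₂ = 1−αi+βj+γk, z″₃ = 1+αi−βj+γk, z″₄ = 1+αi+βj−γk. Then with u₁=v₁=1, u₂=v₂=i, u₃=v₃=j, u₄=v₄=k, for all indices 1 ≤ s,t ≤ 4, the product u_s·v_t lies in the F-linear span of {z′_s, z″_t}. -/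
set_option maxHeartbeats 1000000

open Quaternion

theorem quaternionAlgebra_products_in_span
    (F : Type*) [Field F] (hchar : (2 : F) ≠ 0)
    (p q : F) (hp : p ≠ 0) (hq : q ≠ 0)
    (α β γ : F) (hα : α ≠ 0) (hβ : β ≠ 0) (hγ : γ ≠ 0)
    (u : Fin 4 → ℍ[F,p,q]) (z' z'' : Fin 4 → ℍ[F,p,q])
    (hu : u = ![⟨1,0,0,0⟩, ⟨0,1,0,0⟩, ⟨0,0,1,0⟩, ⟨0,0,0,1⟩])
    (hz' : z' = ![⟨1,α,β,γ⟩, ⟨1,α,-β,-γ⟩, ⟨1,-α,β,-γ⟩, ⟨1,-α,-β,γ⟩])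
    (hz'' : z'' = ![⟨1,-α,-β,-γ⟩, ⟨1,-α,β,γ⟩, ⟨1,α,-β,γ⟩, ⟨1,α,β,-γ⟩]) :
    ∀ s t : Fin 4, u s * u t ∈ Submodule.span F {z' s, z'' t} := by
  subst hu hz' hz''
  intro s t
  have key : ∀ (a b : F) (x y z : ℍ[F,p,q]), a • x + b • y = z →
      z ∈ Submodule.span F {x, y} := by
    intro a b x y z h
    exact Submodule.mem_span_pair.mpr ⟨a, b, h⟩
  fin_cases s <;> fin_cases t <;> simp only [Matrix.cons_val_zero, Matrix.cons_val_one,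
    Matrix.head_cons, Matrix.cons_val_two, Matrix.tail_cons, Matrix.cons_val_three,
    Matrix.cons_val_fin_one, Fin.isValue]
  · exact key (1/2) (1/2) _ _ _ (by ext <;> simp <;> field_simp <;> ring)
  · exact key (1/(2*α)) (-(1/(2*α))) _ _ _ (by ext <;> simp <;> field_simp <;> ring)
  · exact key (1/(2*β)) (-(1/(2*β))) _ _ _ (by ext <;> simp <;> field_simp <;> ring)
  · exact key (1/(2*γ)) (-(1/(2*γ))) _ _ _ (by ext <;> simp <;> field_simp <;> ring)
  · exact key (1/(2*α)) (-(1/(2*α))) _ _ _ (by ext <;> simp <;> field_simp <;> ring)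
  · exact key (p/2) (p/2) _ _ _ (by ext <;> simp <;> field_simp <;> ring)
  · exact key (-(1/(2*γ))) (1/(2*γ)) _ _ _ (by ext <;> simp <;> field_simp <;> ring)
  · exact key (-(p/(2*β))) (p/(2*β)) _ _ _ (by ext <;> simp <;> field_simp <;> ring)
  · exact key (1/(2*β)) (-(1/(2*β))) _ _ _ (by ext <;> simp <;> field_simp <;> ring)
  · exact key (1/(2*γ)) (-(1/(2*γ))) _ _ _ (by ext <;> simp <;> field_simp <;> ring)
  · exact key (q/2) (q/2) _ _ _ (by ext <;> simp <;> field_simp <;> ring)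
  · exact key (q/(2*α)) (-(q/(2*α))) _ _ _ (by ext <;> simp <;> field_simp <;> ring)
  · exact key (1/(2*γ)) (-(1/(2*γ))) _ _ _ (by ext <;> simp <;> field_simp <;> ring)
  · exact key (p/(2*β)) (-(p/(2*β))) _ _ _ (by ext <;> simp <;> field_simp <;> ring)
  · exact key (-(q/(2*α))) (q/(2*α)) _ _ _ (by ext <;> simp <;> field_simp <;> ring)
  · exact key (-(p*q/2)) (-(p*q/2)) _ _ _ (by ext <;> simp <;> field_simp <;> ring)
end

section
/- Let φ : U × V → W be a bilinear map between finite-dimensional vector spaces over a field F. Suppose there exist bases (u₁,…,u_m) of U and (v₁,…,v_n) of V, and elements z′₁,…,z′_m, z″₁,…,z″_n ∈ W such that φ(u_i, v_j) ∈ span{z′_i, z″_j} for all i, j. Then φ admits a bilinear algorithm of length at most m + n, i.e., there exist f_k ∈ U*, g_k ∈ V*, z_k ∈ W for k = 1,…,m+n with φ(u,v) = ∑_{k=1}^{m+n} f_k(u) g_k(v) z_k for all u ∈ U, v ∈ V. -/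
theorem two_component_condition_gives_algorithm
    (F : Type*) [Field F]
    (U V W : Type*) [AddCommGroup U] [AddCommGroup V] [AddCommGroup W]
    [Module F U] [Module F V] [Module F W]
    [FiniteDimensional F U] [FiniteDimensional F V] [FiniteDimensional F W]
    (m n : ℕ) (hm : Module.finrank F U = m) (hn : Module.finrank F V = n)
    (φ : U →ₗ[F] V →ₗ[F] W)
    (bU : Module.Basis (Fin m) F U) (bV : Module.Basis (Fin n) F V)
    (z' : Fin m → W) (z'' : Fin n → W)
    (h : ∀ i j, φ (bU i) (bV j) ∈ Submodule.span F {z' i, z'' j}) :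
    ∃ (f : Fin (m + n) → Module.Dual F U) (g : Fin (m + n) → Module.Dual F V)
      (z : Fin (m + n) → W),
      ∀ u v, φ u v = ∑ k : Fin (m + n), (f k u * g k v) • z k := by
  choose a b hab using fun i j => Submodule.mem_span_pair.mp (h i j)
  set f : Fin (m + n) → Module.Dual F U :=
    Fin.addCases (fun i => bU.coord i) (fun j => ∑ i, b i j • bU.coord i) with hf
  set g : Fin (m + n) → Module.Dual F V :=
    Fin.addCases (fun i => ∑ j, a i j • bV.coord j) (fun j => bV.coord j) with hg
  set z : Fin (m + n) → W := Fin.addCases z' z'' with hz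
  refine ⟨f, g, z, fun u v => ?_⟩
  have key : φ = ∑ k, (f k).smulRight ((g k).smulRight (z k)) := by
    apply bU.ext; intro i; apply bV.ext; intro j
    simp only [LinearMap.sum_apply, LinearMap.smulRight_apply]
    rw [Fin.sum_univ_add]
    simp only [hf, hg, hz, Fin.addCases_left, Fin.addCases_right]
    simp [Module.Basis.coord_apply, Module.Basis.repr_self, Finsupp.single_apply, smul_smul,
      Finset.sum_ite_eq, Finset.sum_ite_eq', Finset.mul_sum, apply_ite (fun (ψ : V →ₗ[F] W) => ψ (bV j)),
      ← hab i j]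
  rw [key]
  simp [smul_smul]
end

section
/- Let φ : U × V → W be a bilinear map admitting a two-component bilinear algorithm. Then there exist bases (u₁,…,u_m) of U and (v₁,…,v_n) of V and elements z′₁,…,z′_m, z″₁,…,z″_n ∈ W such that φ(u_i, v_j) ∈ span{z′_i, z″_j} for all i, j. -/
theorem two_component_algorithm_gives_span_condition
    (F : Type*) [Field F]
    (U V W : Type*) [AddCommGroup U] [AddCommGroup V] [AddCommGroup W]
    [Module F U] [Module F V] [Module F W]
    [FiniteDimensional F U] [FiniteDimensional F V] [FiniteDimensional F W]
    (m n : ℕ) (hm : Module.finrank F U = m) (hn : Module.finrank F V = n)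
    (φ : U →ₗ[F] V →ₗ[F] W)
    (r : ℕ) (f : Fin r → Module.Dual F U) (g : Fin r → Module.Dual F V)
    (z : Fin r → W)
    (halg : ∀ u v, φ u v = ∑ k : Fin r, (f k u * g k v) • z k)
    (I J : Finset (Fin r)) (hdisj : Disjoint I J) (hunion : I ∪ J = Finset.univ)
    (hfI : LinearIndependent F (fun i : I => f i))
    (hfIspan : Submodule.span F (f '' I) = ⊤)
    (hgJ : LinearIndependent F (fun j : J => g j))
    (hgJspan : Submodule.span F (g '' J) = ⊤) :
    ∃ (bU : Module.Basis (Fin m) F U) (bV : Module.Basis (Fin n) F V)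
      (z' : Fin m → W) (z'' : Fin n → W),
      ∀ i j, φ (bU i) (bV j) ∈ Submodule.span F {z' i, z'' j} := by
  classical
  -- bases of the duals
  have hfspan' : ⊤ ≤ Submodule.span F (Set.range (fun i : I => f i)) := by
    have himg : Set.range (fun i : I => f i) = f '' ↑I := by ext x; simp
    rw [himg, hfIspan]
  have hgspan' : ⊤ ≤ Submodule.span F (Set.range (fun j : J => g j)) := by
    have himg : Set.range (fun j : J => g j) = g '' ↑J := by ext x; simp
    rw [himg, hgJspan]
  let bf : Module.Basis I F (Module.Dual F U) := Module.Basis.mk hfI hfspan'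
  let bg : Module.Basis J F (Module.Dual F V) := Module.Basis.mk hgJ hgspan'
  let bU0 : Module.Basis I F U := bf.dualBasis.map (Module.evalEquiv F U).symm
  let bV0 : Module.Basis J F V := bg.dualBasis.map (Module.evalEquiv F V).symm
  have hδU : ∀ (k i : I), f k (bU0 i) = if (k : Fin r) = i then 1 else 0 := by
    intro k i
    have h1 : Module.evalEquiv F U (bU0 i) = bf.dualBasis i := by
      simp [bU0, Module.Basis.map_apply]
    have : f k (bU0 i) = Module.evalEquiv F U (bU0 i) (f k) := by
      rw [Module.evalEquiv_apply, Module.Dual.eval_apply]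
    rw [this, h1]
    have : f k = bf k := (Module.Basis.mk_apply hfI hfspan' k).symm
    rw [this, Module.Basis.dualBasis_apply_self]
    exact if_congr Subtype.ext_iff rfl rfl
  have hδV : ∀ (k j : J), g k (bV0 j) = if (k : Fin r) = j then 1 else 0 := by
    intro k j
    have h1 : Module.evalEquiv F V (bV0 j) = bg.dualBasis j := by
      simp [bV0, Module.Basis.map_apply]
    have : g k (bV0 j) = Module.evalEquiv F V (bV0 j) (g k) := by
      rw [Module.evalEquiv_apply, Module.Dual.eval_apply]
    rw [this, h1]
    have : g k = bg k := (Module.Basis.mk_apply hgJ hgspan' k).symm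
    rw [this, Module.Basis.dualBasis_apply_self]
    exact if_congr Subtype.ext_iff rfl rfl
  -- cardinalities
  have hcardI : Fintype.card I = m := by
    rw [← Module.finrank_eq_card_basis bf, Subspace.dual_finrank_eq, hm]
  have hcardJ : Fintype.card J = n := by
    rw [← Module.finrank_eq_card_basis bg, Subspace.dual_finrank_eq, hn]
  let eU : Fin m ≃ I := (Fintype.equivFinOfCardEq hcardI).symm
  let eV : Fin n ≃ J := (Fintype.equivFinOfCardEq hcardJ).symm
  refine ⟨bU0.reindex eU.symm, bV0.reindex eV.symm,
    fun i => z (eU i), fun j => z (eV j), fun i j => ?_⟩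
  simp only [Module.Basis.reindex_apply, Equiv.symm_symm]
  rw [halg]
  have hsplit : (Finset.univ : Finset (Fin r)) = I ∪ J := hunion.symm
  rw [hsplit, Finset.sum_union hdisj]
  have hI : ∑ k ∈ I, (f k (bU0 (eU i)) * g k (bV0 (eV j))) • z k
      = (g (↑(eU i)) (bV0 (eV j))) • z (↑(eU i)) := by
    have hc : ∀ k ∈ I, (f k (bU0 (eU i)) * g k (bV0 (eV j))) • z k
        = if k = ↑(eU i) then (g k (bV0 (eV j))) • z k else 0 := by
      intro k hk
      rw [hδU ⟨k, hk⟩ (eU i)]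
      by_cases h : k = ↑(eU i) <;> simp [h]
    rw [Finset.sum_congr rfl hc, Finset.sum_ite_eq' I (↑(eU i)) _]
    simp [(eU i).2]
  have hJ : ∑ k ∈ J, (f k (bU0 (eU i)) * g k (bV0 (eV j))) • z k
      = (f (↑(eV j)) (bU0 (eU i))) • z (↑(eV j)) := by
    have hc : ∀ k ∈ J, (f k (bU0 (eU i)) * g k (bV0 (eV j))) • z k
        = if k = ↑(eV j) then (f k (bU0 (eU i))) • z k else 0 := by
      intro k hk
      rw [hδV ⟨k, hk⟩ (eV j)]
      by_cases h : k = ↑(eV j) <;> simp [h]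
    rw [Finset.sum_congr rfl hc, Finset.sum_ite_eq' J (↑(eV j)) _]
    simp [(eV j).2]
  rw [hI, hJ]
  exact Submodule.add_mem _
    (Submodule.smul_mem _ _ (Submodule.subset_span (by simp)))
    (Submodule.smul_mem _ _ (Submodule.subset_span (by simp)))
end

section
/- Let φ : U × V → W be a bilinear map, let u₀ ∈ U be left φ-regular, and let φ = ∑_{k=1}^r f_k ⊗ g_k ⊗ z_k be a bilinear algorithm. Then the functionals {g_k : f_k(u₀) ≠ 0} span V*. -/
theorem g_functionals_span_of_regular_element
    (F : Type*) [Field F]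
    (U V W : Type*) [AddCommGroup U] [AddCommGroup V] [AddCommGroup W]
    [Module F U] [Module F V] [Module F W]
    [FiniteDimensional F U] [FiniteDimensional F V] [FiniteDimensional F W]
    (φ : U →ₗ[F] V →ₗ[F] W)
    (u₀ : U) (hreg : Function.Injective fun v : V => φ u₀ v)
    (r : ℕ) (f : Fin r → Module.Dual F U) (g : Fin r → Module.Dual F V)
    (z : Fin r → W)
    (halg : ∀ u v, φ u v = ∑ k : Fin r, (f k u * g k v) • z k) :
    Submodule.span F (g '' {k : Fin r | f k u₀ ≠ 0}) = ⊤ := by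
  by_contra h
  set S : Submodule F (Module.Dual F V) := Submodule.span F (g '' {k : Fin r | f k u₀ ≠ 0})
  have hco : S.dualCoannihilator ≠ ⊥ := by
    intro hbot
    apply h
    have := Subspace.finrank_add_finrank_dualCoannihilator_eq S
    rw [hbot, finrank_bot] at this
    have hdual : Module.finrank F (Module.Dual F V) = Module.finrank F V :=
      Subspace.dual_finrank_eq
    have : Module.finrank F S = Module.finrank F (Module.Dual F V) := by omega
    exact Submodule.eq_top_of_finrank_eq this
  obtain ⟨v, hv, hvne⟩ := Submodule.exists_mem_ne_zero_of_ne_bot hco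
  have hgv : ∀ k : Fin r, f k u₀ ≠ 0 → g k v = 0 := by
    intro k hk
    have : g k ∈ S := Submodule.subset_span ⟨k, hk, rfl⟩
    exact (Submodule.mem_dualCoannihilator v).mp hv (g k) this
  have : φ u₀ v = φ u₀ 0 := by
    rw [map_zero, halg]
    apply Finset.sum_eq_zero
    intro k _
    by_cases hk : f k u₀ = 0
    · simp [hk]
    · simp [hgv k hk]
  exact hvne (hreg this)
end

section
/- Let φ : U × V → W be a bilinear map of finite-dimensional F-vector spaces with dim U = m. If the rank (minimal bilinear algorithm length) of φ equals m + dim V and the left kernel of φ is trivial, then in any optimal algorithm ∑_{k=1}^{m+n} f_k ⊗ g_k ⊗ z_k, some m of the functionals f_k form a basis of U*. -/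
theorem optimal_algorithm_contains_dual_basis
    (F : Type*) [Field F]
    (U V W : Type*) [AddCommGroup U] [AddCommGroup V] [AddCommGroup W]
    [Module F U] [Module F V] [Module F W]
    [FiniteDimensional F U] [FiniteDimensional F V] [FiniteDimensional F W]
    (m n : ℕ) (hm : Module.finrank F U = m) (hn : Module.finrank F V = n)
    (φ : U →ₗ[F] V →ₗ[F] W)
    (hrank_ge : ∀ (r : ℕ) (f : Fin r → Module.Dual F U)
      (g : Fin r → Module.Dual F V) (z : Fin r → W),
      (∀ u v, φ u v = ∑ k : Fin r, (f k u * g k v) • z k) → m + n ≤ r)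
    (hker : ∀ u : U, (∀ v : V, φ u v = 0) → u = 0)
    (f : Fin (m + n) → Module.Dual F U) (g : Fin (m + n) → Module.Dual F V)
    (z : Fin (m + n) → W)
    (halg : ∀ u v, φ u v = ∑ k : Fin (m + n), (f k u * g k v) • z k) :
    ∃ s : Finset (Fin (m + n)), s.card = m ∧
      LinearIndependent F (fun i : s => f i) ∧
      Submodule.span F (f '' s) = ⊤ := by
  classical
  -- span of range f is the whole dual space
  have hspan : Submodule.span F (Set.range f) = ⊤ := by
    apply Submodule.span_eq_top_of_ne_zero
    intro u hu
    by_contra hcon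
    push_neg at hcon
    apply hu
    apply hker
    intro v
    rw [halg]
    apply Finset.sum_eq_zero
    intro k _
    rw [hcon (f k) ⟨k, rfl⟩, zero_mul, zero_smul]
  obtain ⟨b, hb_sub, hb_span, hb_li⟩ := exists_linearIndependent F (Set.range f)
  rw [hspan] at hb_span
  -- b is a basis of the dual
  let B : Module.Basis b F (Module.Dual F U) :=
    Module.Basis.mk hb_li (by rw [Subtype.range_coe, hb_span])
  have hfinite : b.Finite := hb_li.setFinite
  have hfin : Fintype b := hfinite.fintype
  have hcardb : Fintype.card b = m := by
    have h1 := Module.finrank_eq_card_basis B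
    rw [Subspace.dual_finrank_eq, hm] at h1
    exact h1.symm
  -- choose indices
  have hchoice : ∀ x : b, ∃ k : Fin (m + n), f k = (x : Module.Dual F U) := by
    intro x
    obtain ⟨k, hk⟩ := hb_sub x.2
    exact ⟨k, hk⟩
  choose idx hidx using hchoice
  have hidx_inj : Function.Injective idx := by
    intro x y hxy
    apply Subtype.ext
    rw [← hidx x, ← hidx y, hxy]
  refine ⟨Finset.univ.image idx, ?_, ?_, ?_⟩
  · rw [Finset.card_image_of_injective _ hidx_inj, Finset.card_univ, hcardb]
  · have hmap : ∀ i : (Finset.univ.image idx : Finset (Fin (m + n))),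
        ∃ x : b, idx x = (i : Fin (m + n)) := by
      intro i
      have := i.2
      simp only [Finset.mem_image, Finset.mem_univ, true_and] at this
      exact this
    choose e he using hmap
    have hcomp : (fun i : (Finset.univ.image idx : Finset (Fin (m + n))) => f i)
        = (Subtype.val : b → Module.Dual F U) ∘ e := by
      funext i
      simp only [Function.comp_apply]
      rw [← he i, hidx]
    rw [hcomp]
    apply hb_li.comp
    intro i j hij
    apply Subtype.ext
    rw [← he i, ← he j, hij]
  · have himg : f '' (Finset.univ.image idx : Finset (Fin (m + n))) = b := by
      ext x
      constructor
      · rintro ⟨k, hk, rfl⟩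
        simp only [Finset.coe_image, Finset.coe_univ, Set.image_univ, Set.mem_range] at hk
        obtain ⟨y, rfl⟩ := hk
        rw [hidx]; exact y.2
      · intro hx
        refine ⟨idx ⟨x, hx⟩, ?_, hidx _⟩
        simp
    rw [himg, hb_span]
end

section
/- The bilinear rank of multiplication in the real quaternions ℍ is at most 8: there exist linear functionals f_k, g_k : ℍ → ℝ and quaternions z_k, k = 1,…,8, such that uv = ∑_{k=1}^8 f_k(u) g_k(v) z_k for all u, v ∈ ℍ. Explicitly, one may take the algorithm from the two-component construction with u_i = v_i running over 1, i, j, k, z′ and z″ as given by the ±(i+j+k) pattern with α = β = γ = 1. -/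
open Quaternion

/-- coordinate-combination functional on quaternions -/
def qco (a b c d : ℝ) : Module.Dual ℝ ℍ[ℝ] where
  toFun q := a * q.re + b * q.imI + c * q.imJ + d * q.imK
  map_add' x y := by
    simp [Quaternion.re_add, Quaternion.imI_add, Quaternion.imJ_add, Quaternion.imK_add]; ring
  map_smul' r x := by
    simp [Quaternion.re_smul, Quaternion.imI_smul, Quaternion.imJ_smul, Quaternion.imK_smul,
      smul_eq_mul]; ring

theorem quaternion_rank_le_eight_explicit :
    ∃ (f g : Fin 8 → Module.Dual ℝ ℍ[ℝ]) (z : Fin 8 → ℍ[ℝ]),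
      (∀ k : Fin 8, z k ∈
        ({⟨1,1,1,1⟩, ⟨1,1,-1,-1⟩, ⟨1,-1,1,-1⟩, ⟨1,-1,-1,1⟩,
          ⟨1,-1,-1,-1⟩, ⟨1,-1,1,1⟩, ⟨1,1,-1,1⟩, ⟨1,1,1,-1⟩} : Set ℍ[ℝ])) ∧
      ∀ u v : ℍ[ℝ], u * v = ∑ k : Fin 8, (f k u * g k v) • z k := by
  refine ⟨![qco 1 0 0 0, qco 0 1 0 0, qco 0 0 1 0, qco 0 0 0 1,
      qco (1/2) (-1/2) (-1/2) (-1/2), qco (-1/2) (-1/2) (-1/2) (1/2),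
      qco (-1/2) (1/2) (-1/2) (-1/2), qco (-1/2) (-1/2) (1/2) (-1/2)],
    ![qco (1/2) (1/2) (1/2) (1/2), qco (1/2) (-1/2) (-1/2) (1/2),
      qco (1/2) (1/2) (-1/2) (-1/2), qco (1/2) (-1/2) (1/2) (-1/2),
      qco 1 0 0 0, qco 0 1 0 0, qco 0 0 1 0, qco 0 0 0 1],
    ![⟨1,1,1,1⟩, ⟨1,1,-1,-1⟩, ⟨1,-1,1,-1⟩, ⟨1,-1,-1,1⟩,
      ⟨1,-1,-1,-1⟩, ⟨1,-1,1,1⟩, ⟨1,1,-1,1⟩, ⟨1,1,1,-1⟩], ?_, ?_⟩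
  · intro k
    fin_cases k <;>
      first
        | exact Or.inl rfl
        | exact Or.inr (Or.inl rfl)
        | exact Or.inr (Or.inr (Or.inl rfl))
        | exact Or.inr (Or.inr (Or.inr (Or.inl rfl)))
        | exact Or.inr (Or.inr (Or.inr (Or.inr (Or.inl rfl))))
        | exact Or.inr (Or.inr (Or.inr (Or.inr (Or.inr (Or.inl rfl)))))
        | exact Or.inr (Or.inr (Or.inr (Or.inr (Or.inr (Or.inr (Or.inl rfl))))))
        | exact Or.inr (Or.inr (Or.inr (Or.inr (Or.inr (Or.inr (Or.inr rfl))))))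
  · intro u v
    simp only [Fin.sum_univ_succ, Fin.sum_univ_zero, Matrix.cons_val_zero, Matrix.cons_val_succ,
      add_zero, qco, LinearMap.coe_mk, AddHom.coe_mk]
    repeat erw [Matrix.cons_val_succ]
    repeat erw [Matrix.cons_val_zero]
    ext <;>
      simp only [Quaternion.re_mul, Quaternion.imI_mul, Quaternion.imJ_mul, Quaternion.imK_mul,
        Quaternion.re_add, Quaternion.imI_add, Quaternion.imJ_add, Quaternion.imK_add,
        Quaternion.re_smul, Quaternion.imI_smul, Quaternion.imJ_smul, Quaternion.imK_smul,
        smul_eq_mul] <;> (repeat erw [Quaternion.re_smul]) <;> (repeat erw [Quaternion.imI_smul]) <;>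
      (repeat erw [Quaternion.imJ_smul]) <;> (repeat erw [Quaternion.imK_smul]) <;>
      simp only [smul_eq_mul] <;> ring
end
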